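/- Let T be an invertible n×n Toeplitz matrix over a field K with associated polynomial T̃(x) as above. Then the syzygy module L(T̃(x), x^n, x^{2n}−1) admits a basis consisting of two elements both of degree exactly n (an n-basis). -/

import Mathlib

set_option maxRecDepth 10000

open Polynomial Finset

/-- The polynomial `T̃(x)` associated to the Toeplitz matrix with entries `t_{i-j}`. -/
noncomputable def Ttilde {K : Type*} [Field K] (n : ℕ) (t : ℤ → K) : Polynomial K :=
  ∑ i ∈ Finset.range (2 * n),
    C (if i < n then t i else t ((i : ℤ) - 2 * n)) * X ^ i

/-- The degree of a vector of polynomials: the maximum of the nat-degrees of its entries. -/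
noncomputable def vecDeg {K : Type*} [Field K] (v : Fin 3 → Polynomial K) : ℕ :=
  max (max (v 0).natDegree (v 1).natDegree) (v 2).natDegree

lemma Ttilde_mul_coeff {K : Type*} [Field K] (n : ℕ) (t : ℤ → K) (v : Polynomial K) (m : ℕ) :
    (Ttilde n t * v).coeff m =
      ∑ i ∈ Finset.range (2 * n),
        (if i < n then t i else t ((i : ℤ) - 2 * n)) * (if i ≤ m then v.coeff (m - i) else 0) := by
  rw [Ttilde, Finset.sum_mul, finset_sum_coeff]
  refine Finset.sum_congr rfl fun i _ => ?_
  have : C (if i < n then t i else t ((i : ℤ) - 2 * n)) * X ^ i * v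
      = C (if i < n then t i else t ((i : ℤ) - 2 * n)) * (v * X ^ i) := by ring
  rw [this, coeff_C_mul, coeff_mul_X_pow']

lemma key_row {K : Type*} [Field K] (n : ℕ) (t : ℤ → K)
    (v0 v1 v2 : Polynomial K)
    (heq : Ttilde n t * v0 + X ^ n * v1 + (X ^ (2 * n) - 1) * v2 = 0)
    (h0 : v0.natDegree ≤ n) (h2 : v2.natDegree ≤ n)
    (k : ℕ) (hk : k < n) (h1 : v1.coeff (n + k) = 0) :
    ∑ j ∈ Finset.range (n + 1), t ((k : ℤ) - (j : ℤ)) * v0.coeff j = 0 := by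
  have heq' : Ttilde n t * v0 + v1 * X ^ n + (v2 * X ^ (2*n) - v2) = 0 := by
    rw [← heq]; ring
  have E : ∀ m, (Ttilde n t * v0).coeff m + (v1 * X ^ n).coeff m
      + ((v2 * X ^ (2*n)).coeff m - v2.coeff m) = 0 := by
    intro m
    have := congrArg (fun p => Polynomial.coeff p m) heq'
    simpa [coeff_add, coeff_sub] using this
  have E1 := E k
  have E2 := E (2 * n + k)
  rw [Ttilde_mul_coeff, coeff_mul_X_pow', coeff_mul_X_pow'] at E1 E2
  rw [if_neg (by omega : ¬ n ≤ k), if_neg (by omega : ¬ 2*n ≤ k)] at E1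
  rw [if_pos (by omega : n ≤ 2*n + k), if_pos (by omega : 2*n ≤ 2*n + k)] at E2
  have hv1 : v1.coeff (2*n + k - n) = 0 := by
    rwa [show 2*n + k - n = n + k by omega]
  have hv2 : v2.coeff (2*n + k) = 0 :=
    coeff_eq_zero_of_natDegree_lt (by omega)
  rw [hv1, hv2, show 2*n + k - 2*n = k by omega] at E2
  set S1 := ∑ i ∈ Finset.range (2*n),
      (if i < n then t i else t ((i : ℤ) - 2 * n)) * (if i ≤ k then v0.coeff (k - i) else 0) with hS1
  set S2 := ∑ i ∈ Finset.range (2*n),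
      (if i < n then t i else t ((i : ℤ) - 2 * n)) *
        (if i ≤ 2*n + k then v0.coeff (2*n + k - i) else 0) with hS2
  have hsum : S1 + S2 = 0 := by linear_combination E1 + E2
  have hS1' : S1 = ∑ j ∈ Finset.range (k+1), t ((k : ℤ) - (j : ℤ)) * v0.coeff j := by
    rw [hS1]
    rw [← Finset.sum_subset (Finset.range_subset_range.2 (by omega : k+1 ≤ 2*n))
      (fun i _ hi => by
        rw [if_neg (by simp at hi; omega : ¬ i ≤ k), mul_zero])]
    rw [← Finset.sum_range_reflect]
    refine Finset.sum_congr rfl fun j hj => ?_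
    simp only [Finset.mem_range] at hj
    have hjk : j ≤ k := by omega
    rw [show k + 1 - 1 - j = k - j by omega]
    rw [if_pos (by omega : k - j < n), if_pos (by omega : k - j ≤ k)]
    rw [show k - (k - j) = j by omega]
    congr 2
    push_cast [Nat.cast_sub hjk]
    ring
  have hS2' : S2 = ∑ j ∈ Finset.Ico (k+1) (n+1), t ((k : ℤ) - (j : ℤ)) * v0.coeff j := by
    rw [hS2]
    have hsub : Finset.Ico (n+k) (2*n) ⊆ Finset.range (2*n) := by
      intro i hi; simp at hi ⊢; omega
    rw [← Finset.sum_subset hsub (fun i hi hni => ?_)]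
    · refine Finset.sum_nbij' (fun i => 2*n + k - i) (fun j => 2*n + k - j) ?_ ?_ ?_ ?_ ?_
      · intro i hi; simp only [Finset.mem_Ico] at hi ⊢; omega
      · intro j hj; simp only [Finset.mem_Ico] at hj ⊢; omega
      · intro i hi; simp only [Finset.mem_Ico] at hi; omega
      · intro j hj; simp only [Finset.mem_Ico] at hj; omega
      · intro i hi
        simp only [Finset.mem_Ico] at hi
        rw [if_neg (by omega : ¬ i < n), if_pos (by omega : i ≤ 2*n + k)]
        congr 2
        · have : ((2*n + k - i : ℕ) : ℤ) = 2*n + k - i := by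
            push_cast [Nat.cast_sub (by omega : i ≤ 2*n+k)]; ring
          rw [this]; ring_nf
    · simp only [Finset.mem_range] at hi
      simp only [Finset.mem_Ico, not_and, not_le] at hni
      have : v0.coeff (2*n + k - i) = 0 := by
        apply coeff_eq_zero_of_natDegree_lt
        omega
      rw [if_pos (by omega : i ≤ 2*n + k), this, mul_zero]
  rw [hS1', hS2'] at hsum
  rwa [Finset.sum_range_add_sum_Ico _ (by omega : k+1 ≤ n+1)] at hsum

lemma cpoly_ne_zero {K : Type*} [Field K] (n : ℕ) (hn : 0 < n) : ((X:K[X])^(2*n) - 1) ≠ 0 := by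
  have := Polynomial.monic_X_pow_sub_C (1:K) (by omega : 2*n ≠ 0)
  simpa using this.ne_zero

lemma cpoly_natDegree {K : Type*} [Field K] (n : ℕ) : ((X:K[X])^(2*n) - 1).natDegree = 2*n := by
  simpa using Polynomial.natDegree_X_pow_sub_C (n := 2*n) (r := (1:K))

lemma cpoly_coprime {K : Type*} [Field K] (n : ℕ) : IsCoprime ((X:K[X])^(2*n) - 1) (X^n) :=
  ⟨-1, X^n, by rw [show 2*n = n + n by ring, pow_add]; ring⟩

lemma no_small {K : Type*} [Field K] (n : ℕ) (hn : 0 < n) (t : ℤ → K)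
    (T : Matrix (Fin n) (Fin n) K) (hT : T = Matrix.of fun i j : Fin n => t ((i : ℤ) - (j : ℤ)))
    (hTinv : IsUnit T) (v0 v1 v2 : Polynomial K)
    (heq : Ttilde n t * v0 + X ^ n * v1 + (X ^ (2 * n) - 1) * v2 = 0)
    (h0 : v0.natDegree < n) (h1 : v1.natDegree < n) (h2 : v2.natDegree < n) :
    v0 = 0 ∧ v1 = 0 ∧ v2 = 0 := by
  have hc0 : ((X:K[X])^(2*n) - 1) ≠ 0 := cpoly_ne_zero n hn
  have hv0 : v0 = 0 := by
    set y : Fin n → K := fun j => v0.coeff j with hy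
    have hmv : T.mulVec y = 0 := by
      funext k
      have hrow := key_row n t v0 v1 v2 heq (by omega) (by omega) k k.isLt
        (coeff_eq_zero_of_natDegree_lt (by omega))
      have hlast : t ((k : ℤ) - (n : ℤ)) * v0.coeff n = 0 := by
        rw [coeff_eq_zero_of_natDegree_lt h0, mul_zero]
      rw [Finset.sum_range_succ, hlast, add_zero] at hrow
      have : T.mulVec y k = ∑ j ∈ Finset.range n, t ((k : ℤ) - (j : ℤ)) * v0.coeff j := by
        rw [hT, Matrix.mulVec, dotProduct,
          Finset.sum_range fun j => t ((k : ℤ) - (j : ℤ)) * v0.coeff j]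
        rfl
      rw [Pi.zero_apply, this, hrow]
    have hy0 : y = 0 := by
      have hinj := Matrix.mulVec_injective_iff_isUnit.mpr hTinv
      have : T.mulVec y = T.mulVec 0 := by rw [hmv, Matrix.mulVec_zero]
      exact hinj this
    ext m
    rcases lt_or_ge m n with hm | hm
    · have := congrFun hy0 ⟨m, hm⟩
      simpa [hy] using this
    · simp [coeff_eq_zero_of_natDegree_lt (lt_of_lt_of_le h0 hm)]
  rw [hv0, mul_zero, zero_add] at heq
  have hdvd : ((X:K[X])^(2*n) - 1) ∣ v1 := by
    refine (cpoly_coprime n).dvd_of_dvd_mul_left ?_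
    exact ⟨-v2, by linear_combination heq⟩
  have hv1 : v1 = 0 := by
    by_contra h
    have := Polynomial.natDegree_le_of_dvd hdvd h
    rw [cpoly_natDegree] at this
    omega
  rw [hv1, mul_zero, zero_add] at heq
  have hv2 : v2 = 0 := by
    rcases mul_eq_zero.mp heq with h | h
    · exact absurd h hc0
    · exact h
  exact ⟨hv0, hv1, hv2⟩

lemma Ttilde_natDegree_le {K : Type*} [Field K] (n : ℕ) (t : ℤ → K) :
    (Ttilde n t).natDegree ≤ 2 * n := by
  refine Polynomial.natDegree_sum_le_of_forall_le _ _ fun i hi => ?_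
  exact le_trans (Polynomial.natDegree_C_mul_X_pow_le _ i) (by simp at hi; omega)

/-- interpret a coefficient vector as a polynomial of degree < m -/
noncomputable def toPoly (K : Type*) [Field K] (m : ℕ) : (Fin m → K) →ₗ[K] Polynomial K :=
  (Polynomial.degreeLT K m).subtype ∘ₗ (Polynomial.degreeLTEquiv K m).symm.toLinearMap

lemma toPoly_mem {K : Type*} [Field K] (m : ℕ) (v : Fin m → K) :
    toPoly K m v ∈ Polynomial.degreeLT K m := ((Polynomial.degreeLTEquiv K m).symm v).2

lemma toPoly_natDegree {K : Type*} [Field K] {m : ℕ} (hm : 0 < m) (v : Fin m → K) :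
    (toPoly K m v).natDegree ≤ m - 1 := by
  have := Polynomial.mem_degreeLT.mp (toPoly_mem m v)
  rcases eq_or_ne (toPoly K m v) 0 with h | h
  · simp [h]
  · have := (Polynomial.natDegree_lt_iff_degree_lt h).mpr (by exact_mod_cast this)
    omega

lemma toPoly_inj {K : Type*} [Field K] (m : ℕ) : Function.Injective (toPoly K m) := by
  intro x y h
  have : ((Polynomial.degreeLTEquiv K m).symm x : Polynomial K)
      = ((Polynomial.degreeLTEquiv K m).symm y : Polynomial K) := h
  have := Subtype.ext this
  simpa using congrArg (Polynomial.degreeLTEquiv K m) this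

noncomputable def sysMapRaw (K : Type*) [Field K] (n : ℕ) (t : ℤ → K) :
    ((Fin 3) → (Fin (n+1) → K)) →ₗ[K] Polynomial K :=
  (LinearMap.mulLeft K (Ttilde n t)) ∘ₗ (toPoly K (n+1)) ∘ₗ (LinearMap.proj 0)
  + (LinearMap.mulLeft K ((X:K[X])^n)) ∘ₗ (toPoly K (n+1)) ∘ₗ (LinearMap.proj 1)
  + (LinearMap.mulLeft K ((X:K[X])^(2*n) - 1)) ∘ₗ (toPoly K (n+1)) ∘ₗ (LinearMap.proj 2)

lemma sysMapRaw_apply {K : Type*} [Field K] (n : ℕ) (t : ℤ → K) (v : Fin 3 → (Fin (n+1) → K)) :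
    sysMapRaw K n t v = Ttilde n t * toPoly K (n+1) (v 0) + X ^ n * toPoly K (n+1) (v 1)
      + ((X:K[X]) ^ (2*n) - 1) * toPoly K (n+1) (v 2) := rfl

noncomputable def sysMap (K : Type*) [Field K] (n : ℕ) (t : ℤ → K) :
    ((Fin 3) → (Fin (n+1) → K)) →ₗ[K] (Fin (3*n+1) → K) :=
  LinearMap.pi (fun j => (Polynomial.lcoeff K (j : ℕ)) ∘ₗ sysMapRaw K n t)

lemma sysMapRaw_natDegree_le {K : Type*} [Field K] (n : ℕ) (hn : 0 < n) (t : ℤ → K)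
    (v : Fin 3 → (Fin (n+1) → K)) : (sysMapRaw K n t v).natDegree ≤ 3*n := by
  rw [sysMapRaw_apply]
  have hd : ∀ i, (toPoly K (n+1) (v i)).natDegree ≤ n := by
    intro i; simpa using toPoly_natDegree (by omega) (v i)
  refine le_trans (Polynomial.natDegree_add_le _ _) ?_
  rw [max_le_iff]
  refine ⟨le_trans (Polynomial.natDegree_add_le _ _) ?_, ?_⟩
  · rw [max_le_iff]
    refine ⟨le_trans Polynomial.natDegree_mul_le ?_, le_trans Polynomial.natDegree_mul_le ?_⟩
    · have := Ttilde_natDegree_le n t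
      have := hd 0
      omega
    · have := hd 1
      simp only [Polynomial.natDegree_X_pow]
      omega
  · refine le_trans Polynomial.natDegree_mul_le ?_
    have := hd 2
    rw [cpoly_natDegree]
    omega

lemma sysMap_ker {K : Type*} [Field K] (n : ℕ) (hn : 0 < n) (t : ℤ → K)
    (v : Fin 3 → (Fin (n+1) → K)) (hv : sysMap K n t v = 0) : sysMapRaw K n t v = 0 := by
  ext m
  rcases lt_or_ge m (3*n+1) with hm | hm
  · have := congrFun hv ⟨m, hm⟩
    simpa [sysMap] using this
  · simp only [Polynomial.coeff_zero]
    exact Polynomial.coeff_eq_zero_of_natDegree_lt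
      (lt_of_le_of_lt (sysMapRaw_natDegree_le n hn t v) (by omega))

lemma exists_pair {K : Type*} [Field K] (n : ℕ) (hn : 0 < n) (t : ℤ → K) :
    ∃ P Q : Fin 3 → Polynomial K,
      (Ttilde n t * P 0 + X ^ n * P 1 + (X ^ (2 * n) - 1) * P 2 = 0) ∧
      (Ttilde n t * Q 0 + X ^ n * Q 1 + (X ^ (2 * n) - 1) * Q 2 = 0) ∧
      (∀ i, (P i).natDegree ≤ n) ∧ (∀ i, (Q i).natDegree ≤ n) ∧
      (∀ s u : K, s • P + u • Q = 0 → s = 0 ∧ u = 0) := by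
  classical
  have hker : 2 ≤ Module.finrank K (LinearMap.ker (sysMap K n t)) := by
    have h1 := LinearMap.finrank_range_add_finrank_ker (sysMap K n t)
    have h2 : Module.finrank K ((Fin 3) → (Fin (n+1) → K)) = 3 * (n+1) := by
      simp [Module.finrank_pi_fintype, Module.finrank_pi]
      try ring
    have h3 : Module.finrank K (LinearMap.range (sysMap K n t)) ≤ 3*n+1 := by
      refine le_trans (Submodule.finrank_le _) ?_
      simp [Module.finrank_pi]
    omega
  let b := Module.finBasis K (LinearMap.ker (sysMap K n t))
  have hli0 : LinearIndependent K (fun i : Fin 2 => b (Fin.castLE hker i)) :=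
    b.linearIndependent.comp _ (Fin.castLE_injective hker)
  set ψ : ((Fin 3) → (Fin (n+1) → K)) →ₗ[K] (Fin 3 → Polynomial K) :=
    LinearMap.pi (fun i => (toPoly K (n+1)) ∘ₗ LinearMap.proj i) with hψ
  have hψinj : LinearMap.ker ψ = ⊥ := by
    rw [LinearMap.ker_eq_bot']
    intro v hv
    funext i
    have := congrFun hv i
    exact toPoly_inj (n+1) (by simpa [hψ] using this)
  have hli : LinearIndependent K (fun i : Fin 2 => ψ ((b (Fin.castLE hker i) : _))) :=
    (hli0.map' (LinearMap.ker _).subtype (Submodule.ker_subtype _)).map' ψ hψinj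
  have hmem : ∀ i : Fin 2,
      Ttilde n t * ψ (b (Fin.castLE hker i) : _) 0
      + X ^ n * ψ (b (Fin.castLE hker i) : _) 1
      + (X ^ (2 * n) - 1) * ψ (b (Fin.castLE hker i) : _) 2 = 0 := by
    intro i
    have h := (b (Fin.castLE hker i)).2
    rw [LinearMap.mem_ker] at h
    have h2 := sysMap_ker n hn t _ h
    rw [sysMapRaw_apply] at h2
    exact h2
  refine ⟨ψ (b (Fin.castLE hker 0) : _), ψ (b (Fin.castLE hker 1) : _),
    hmem 0, hmem 1, ?_, ?_, ?_⟩
  · intro i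
    have h := toPoly_natDegree (by omega : 0 < n+1) (((b (Fin.castLE hker 0)) : Fin 3 → Fin (n+1) → K) i)
    simp only [add_tsub_cancel_right] at h
    exact h
  · intro i
    have h := toPoly_natDegree (by omega : 0 < n+1) (((b (Fin.castLE hker 1)) : Fin 3 → Fin (n+1) → K) i)
    simp only [add_tsub_cancel_right] at h
    exact h
  · intro s u hsu
    have := Fintype.linearIndependent_iff.mp hli ![s, u] (by
      simpa [Fin.sum_univ_two] using hsu)
    exact ⟨this 0, this 1⟩
/-- If the Toeplitz matrix `T` is invertible, then the syzygy module
`L(T̃(x), x^n, x^{2n}-1)` admits a basis of two elements, both of degree exactly `n`. -/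
theorem stmt_3 {K : Type*} [Field K] (n : ℕ) (hn : 0 < n) (t : ℤ → K)
    (T : Matrix (Fin n) (Fin n) K) (hT : T = Matrix.of fun i j : Fin n => t ((i : ℤ) - (j : ℤ)))
    (hTinv : IsUnit T)
    (S : Submodule (Polynomial K) (Fin 3 → Polynomial K))
    (hS : ∀ p : Fin 3 → Polynomial K, p ∈ S ↔
      Ttilde n t * p 0 + X ^ n * p 1 + (X ^ (2 * n) - 1) * p 2 = 0) :
    ∃ b : Module.Basis (Fin 2) (Polynomial K) S,
      vecDeg (b 0 : Fin 3 → Polynomial K) = n ∧ vecDeg (b 1 : Fin 3 → Polynomial K) = n := by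
  classical
  have hc0 : ((X:K[X])^(2*n) - 1) ≠ 0 := cpoly_ne_zero n hn
  have hX0 : ((X:K[X])^n) ≠ 0 := pow_ne_zero _ X_ne_zero
  have hcop : IsCoprime ((X:K[X])^(2*n) - 1) ((X:K[X])^n) := cpoly_coprime n
  -- no nonzero small vectors
  have hsmall : ∀ v : Fin 3 → K[X],
      (Ttilde n t * v 0 + X ^ n * v 1 + (X ^ (2 * n) - 1) * v 2 = 0) →
      (∀ i, (v i).natDegree < n) → v = 0 := by
    intro v hv hd
    obtain ⟨h0, h1, h2⟩ := no_small n hn t T hT hTinv _ _ _ hv (hd 0) (hd 1) (hd 2)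
    funext i
    fin_cases i <;> simpa [h0, h1, h2]
  -- if the first component vanishes, the whole vector vanishes
  have hfirst : ∀ v : Fin 3 → K[X],
      (Ttilde n t * v 0 + X ^ n * v 1 + (X ^ (2 * n) - 1) * v 2 = 0) →
      (∀ i, (v i).natDegree ≤ n) → v 0 = 0 → v = 0 := by
    intro v hv hd h0
    rw [h0, mul_zero, zero_add] at hv
    have hdvd : ((X:K[X])^(2*n) - 1) ∣ v 1 :=
      hcop.dvd_of_dvd_mul_left ⟨-(v 2), by linear_combination hv⟩
    have hv1 : v 1 = 0 := by
      by_contra h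
      have := Polynomial.natDegree_le_of_dvd hdvd h
      rw [cpoly_natDegree] at this
      have := hd 1
      omega
    rw [hv1, mul_zero, zero_add] at hv
    have hv2 : v 2 = 0 := by
      rcases mul_eq_zero.mp hv with h | h
      · exact absurd h hc0
      · exact h
    funext i
    fin_cases i <;> simpa [h0, hv1, hv2]
  obtain ⟨P, Q, hP, hQ, hPd, hQd, hind⟩ := exists_pair n hn t
  have hPne : P ≠ 0 := by
    intro h
    obtain ⟨h1, -⟩ := hind 1 0 (by simp [h])
    exact one_ne_zero h1
  have hQne : Q ≠ 0 := by
    intro h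
    obtain ⟨-, h1⟩ := hind 0 1 (by simp [h])
    exact one_ne_zero h1
  -- minor identities
  have hI1 : (X:K[X])^n * (P 1 * Q 0 - P 0 * Q 1)
      = ((X:K[X])^(2*n) - 1) * (P 0 * Q 2 - P 2 * Q 0) := by
    linear_combination Q 0 * hP - P 0 * hQ
  obtain ⟨D, hD⟩ : ((X:K[X])^(2*n) - 1) ∣ (P 1 * Q 0 - P 0 * Q 1) :=
    hcop.dvd_of_dvd_mul_left ⟨P 0 * Q 2 - P 2 * Q 0, hI1⟩
  have hD2 : P 0 * Q 2 - P 2 * Q 0 = (X:K[X])^n * D := by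
    apply mul_left_cancel₀ hc0
    rw [hD] at hI1
    linear_combination -hI1
  have hD3 : P 1 * Q 2 - P 2 * Q 1 = -(Ttilde n t * D) := by
    apply mul_left_cancel₀ hX0
    linear_combination Q 2 * hP - P 2 * hQ - Ttilde n t * hD2
  -- D is nonzero
  have hDne : D ≠ 0 := by
    intro hD0
    rw [hD0, mul_zero] at hD hD2
    have hP0 : P 0 ≠ 0 := fun h => hPne (hfirst P hP hPd h)
    have hQ0 : Q 0 ≠ 0 := fun h => hQne (hfirst Q hQ hQd h)
    set g := GCDMonoid.gcd (P 0) (Q 0) with hg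
    have hgne : g ≠ 0 := gcd_ne_zero_of_left hP0
    obtain ⟨lam, hlam⟩ := GCDMonoid.gcd_dvd_left (P 0) (Q 0)
    obtain ⟨mu, hmu⟩ := GCDMonoid.gcd_dvd_right (P 0) (Q 0)
    rw [← hg] at hlam hmu
    have hlamne : lam ≠ 0 := by
      intro h; rw [h, mul_zero] at hlam; exact hP0 hlam
    have hmune : mu ≠ 0 := by
      intro h; rw [h, mul_zero] at hmu; exact hQ0 hmu
    have hco : IsCoprime lam mu := by
      have h1 : P 0 / g = lam := by rw [hlam]; exact mul_div_cancel_left₀ _ hgne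
      have h2 : Q 0 / g = mu := by rw [hmu]; exact mul_div_cancel_left₀ _ hgne
      have := isCoprime_div_gcd_div_gcd (p := P 0) (q := Q 0) hQ0
      rw [← hg] at this
      rwa [h1, h2] at this
    have e1 : mu * P 1 = lam * Q 1 := by
      apply mul_left_cancel₀ hgne
      linear_combination Q 1 * hlam - P 1 * hmu + hD
    have e2 : mu * P 2 = lam * Q 2 := by
      apply mul_left_cancel₀ hgne
      linear_combination Q 2 * hlam - P 2 * hmu - hD2
    obtain ⟨f1, hf1⟩ : lam ∣ P 1 := hco.dvd_of_dvd_mul_left ⟨Q 1, e1⟩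
    obtain ⟨f2, hf2⟩ : lam ∣ P 2 := hco.dvd_of_dvd_mul_left ⟨Q 2, e2⟩
    have heqhat : Ttilde n t * g + (X:K[X])^n * f1 + ((X:K[X])^(2*n) - 1) * f2 = 0 := by
      apply mul_left_cancel₀ hlamne
      rw [mul_zero]
      linear_combination hP - Ttilde n t * hlam - (X:K[X])^n * hf1 - ((X:K[X])^(2*n) - 1) * hf2
    have hq1 : Q 1 = mu * f1 := by
      apply mul_left_cancel₀ hlamne
      linear_combination mu * hf1 - e1
    have hq2 : Q 2 = mu * f2 := by
      apply mul_left_cancel₀ hlamne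
      linear_combination mu * hf2 - e2
    have hcase : 1 ≤ lam.natDegree ∨ 1 ≤ mu.natDegree := by
      by_contra hcon
      push_neg at hcon
      obtain ⟨hl, hm⟩ := hcon
      obtain ⟨la, hla⟩ := Polynomial.natDegree_eq_zero.mp (by omega : lam.natDegree = 0)
      obtain ⟨ma, hma⟩ := Polynomial.natDegree_eq_zero.mp (by omega : mu.natDegree = 0)
      have hdep : (ma) • P + (-la) • Q = 0 := by
        funext i
        have hi : mu * P i = lam * Q i := by
          fin_cases i
          · show mu * P 0 = lam * Q 0
            rw [hlam, hmu]; ring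
          · exact e1
          · exact e2
        simp only [Pi.add_apply, Pi.smul_apply, Pi.zero_apply, Polynomial.smul_eq_C_mul,
          map_neg, hla, hma]
        linear_combination hi
      obtain ⟨h1, -⟩ := hind ma (-la) hdep
      exact hmune (by rw [← hma, h1, map_zero])
    have hdeg' : g.natDegree < n ∧ f1.natDegree < n ∧ f2.natDegree < n := by
      have hkey : ∀ r : K[X], r ≠ 0 → 1 ≤ r.natDegree → (r * g).natDegree ≤ n →
          (r * f1).natDegree ≤ n → (r * f2).natDegree ≤ n →
          g.natDegree < n ∧ f1.natDegree < n ∧ f2.natDegree < n := by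
        intro r hr hrd hbg hb1 hb2
        rw [Polynomial.natDegree_mul hr hgne] at hbg
        refine ⟨by omega, ?_, ?_⟩
        · rcases eq_or_ne f1 0 with h | h
          · rw [h]; simpa using hn
          · rw [Polynomial.natDegree_mul hr h] at hb1
            omega
        · rcases eq_or_ne f2 0 with h | h
          · rw [h]; simpa using hn
          · rw [Polynomial.natDegree_mul hr h] at hb2
            omega
      rcases hcase with h | h
      · refine hkey lam hlamne h ?_ ?_ ?_
        · rw [mul_comm, ← hlam]; exact hPd 0
        · rw [← hf1]; exact hPd 1
        · rw [← hf2]; exact hPd 2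
      · refine hkey mu hmune h ?_ ?_ ?_
        · rw [mul_comm, ← hmu]; exact hQd 0
        · rw [← hq1]; exact hQd 1
        · rw [← hq2]; exact hQd 2
    have := hsmall ![g, f1, f2] (by simpa using heqhat)
      (fun i => by fin_cases i <;> simp [hdeg'.1, hdeg'.2.1, hdeg'.2.2])
    have hg0 : g = 0 := by
      have := congrFun this 0
      simpa using this
    exact hgne hg0
  -- D is a nonzero constant
  have hDdeg : D.natDegree = 0 := by
    have hle : (P 1 * Q 0 - P 0 * Q 1).natDegree ≤ 2*n := by
      refine le_trans (Polynomial.natDegree_sub_le _ _) ?_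
      refine max_le (le_trans Polynomial.natDegree_mul_le ?_)
        (le_trans Polynomial.natDegree_mul_le ?_)
      · have := hPd 1; have := hQd 0; omega
      · have := hPd 0; have := hQd 1; omega
    rw [hD, Polynomial.natDegree_mul hc0 hDne, cpoly_natDegree] at hle
    omega
  obtain ⟨d, hd⟩ := Polynomial.natDegree_eq_zero.mp hDdeg
  have hdne : d ≠ 0 := by
    intro h
    exact hDne (by rw [← hd, h, map_zero])
  have hPS : P ∈ S := (hS P).mpr hP
  have hQS : Q ∈ S := (hS Q).mpr hQ
  -- linear independence over K[X]
  have hli : LinearIndependent (Polynomial K) ![(⟨P, hPS⟩ : S), ⟨Q, hQS⟩] := by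
    rw [LinearIndependent.pair_iff]
    intro s u hsu
    have hsu' : s • P + u • Q = 0 := by
      have := congrArg Subtype.val hsu
      simpa using this
    have h0 := congrFun hsu' 0
    have h1 := congrFun hsu' 1
    simp only [Pi.add_apply, Pi.smul_apply, smul_eq_mul, Pi.zero_apply] at h0 h1
    have hcd : (((X:K[X])^(2*n) - 1) * D) ≠ 0 := mul_ne_zero hc0 hDne
    constructor
    · have : s * (((X:K[X])^(2*n) - 1) * D) = 0 := by
        linear_combination Q 0 * h1 - Q 1 * h0 - s * hD
      exact (mul_eq_zero.mp this).resolve_right hcd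
    · have : u * (((X:K[X])^(2*n) - 1) * D) = 0 := by
        linear_combination P 1 * h0 - P 0 * h1 - u * hD
      exact (mul_eq_zero.mp this).resolve_right hcd
  -- spanning
  have hsp : ⊤ ≤ Submodule.span (Polynomial K)
      (Set.range ![(⟨P, hPS⟩ : S), ⟨Q, hQS⟩]) := by
    intro x _
    have hv : Ttilde n t * (x : Fin 3 → K[X]) 0 + X ^ n * (x : Fin 3 → K[X]) 1
        + (X ^ (2 * n) - 1) * (x : Fin 3 → K[X]) 2 = 0 := (hS _).mp x.2
    set v : Fin 3 → K[X] := (x : Fin 3 → K[X]) with hvdef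
    obtain ⟨F, hF⟩ : ((X:K[X])^(2*n) - 1) ∣ (v 1 * Q 0 - v 0 * Q 1) :=
      hcop.dvd_of_dvd_mul_left ⟨v 0 * Q 2 - v 2 * Q 0, by linear_combination Q 0 * hv - v 0 * hQ⟩
    obtain ⟨G, hG⟩ : ((X:K[X])^(2*n) - 1) ∣ (P 1 * v 0 - P 0 * v 1) :=
      hcop.dvd_of_dvd_mul_left ⟨P 0 * v 2 - P 2 * v 0, by linear_combination v 0 * hP - P 0 * hv⟩
    have hpairsub : ({(⟨P, hPS⟩ : S), ⟨Q, hQS⟩} : Set S)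
        ⊆ Set.range ![(⟨P, hPS⟩ : S), ⟨Q, hQS⟩] := by
      rintro z (rfl | rfl)
      · exact ⟨0, rfl⟩
      · exact ⟨1, rfl⟩
    refine Submodule.span_mono hpairsub (Submodule.mem_span_pair.mpr
      ⟨C d⁻¹ * F, C d⁻¹ * G, ?_⟩)
    apply Subtype.ext
    have hcoe : ((C d⁻¹ * F) • (⟨P, hPS⟩ : S) + (C d⁻¹ * G) • (⟨Q, hQS⟩ : S) : S).val
        = (C d⁻¹ * F) • P + (C d⁻¹ * G) • Q := rfl
    rw [hcoe]
    funext i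
    have hcomp : F * P i + G * Q i = D * v i := by
      fin_cases i
      · show F * P 0 + G * Q 0 = D * v 0
        apply mul_left_cancel₀ hc0
        linear_combination v 0 * hD - P 0 * hF - Q 0 * hG
      · show F * P 1 + G * Q 1 = D * v 1
        apply mul_left_cancel₀ hc0
        linear_combination v 1 * hD - P 1 * hF - Q 1 * hG
      · show F * P 2 + G * Q 2 = D * v 2
        apply mul_left_cancel₀ hc0
        linear_combination v 0 * hD3 - v 1 * hD2 - D * hv - P 2 * hF - Q 2 * hG
    have : ((C d⁻¹ * F) • P + (C d⁻¹ * G) • Q) i = C d⁻¹ * (F * P i + G * Q i) := by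
      simp only [Pi.add_apply, Pi.smul_apply, smul_eq_mul]
      ring
    rw [this, hcomp, ← hd, ← mul_assoc, ← Polynomial.C_mul, inv_mul_cancel₀ hdne,
      Polynomial.C_1, one_mul]
  -- vecDeg facts
  have hvd : ∀ (v : Fin 3 → K[X]),
      (Ttilde n t * v 0 + X ^ n * v 1 + (X ^ (2 * n) - 1) * v 2 = 0) →
      (∀ i, (v i).natDegree ≤ n) → v ≠ 0 → vecDeg v = n := by
    intro v hveq hvd hvne
    have hub : vecDeg v ≤ n := by
      rw [vecDeg]
      exact max_le (max_le (hvd 0) (hvd 1)) (hvd 2)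
    rcases eq_or_lt_of_le hub with h | h
    · exact h
    · exfalso
      apply hvne
      refine hsmall v hveq fun i => ?_
      have : (v i).natDegree ≤ vecDeg v := by
        rw [vecDeg]
        fin_cases i
        · exact le_max_of_le_left (le_max_left _ _)
        · exact le_max_of_le_left (le_max_right _ _)
        · exact le_max_right _ _
      omega
  refine ⟨Module.Basis.mk hli hsp, ?_, ?_⟩
  · have hb0 : ((Module.Basis.mk hli hsp) 0 : Fin 3 → K[X]) = P := by
      rw [Module.Basis.mk_apply]
      rfl
    rw [hb0]
    exact hvd P hP hPd hPne
  · have hb1 : ((Module.Basis.mk hli hsp) 1 : Fin 3 → K[X]) = Q := by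
      rw [Module.Basis.mk_apply]
      rfl
    rw [hb1]
    exact hvd Q hQ hQd hQne
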